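/- Let N = F ⊕ ℤ^d with F a finite abelian group, π : N → ℤ^d the projection, and 𝒜 = (a_1,…,a_n) a list of elements of N such that the images π(a_1),…,π(a_n) generate ℤ^d as a group and the cone C = ℝ_{≥0}π(a_1) + ⋯ + ℝ_{≥0}π(a_n) ⊆ ℝ^d satisfies C ∩ (−C) = {0}. Let K° := {u ∈ N : π(u) lies in the topological interior of C in ℝ^d}. Then ℕ𝒜 + K° ⊆ K°, and K° is finitely generated as an ℕ𝒜-module: there exist finitely many k_1,…,k_m ∈ K° with K° = ⋃_{i=1}^m (ℕ𝒜 + k_i). -/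

import Mathlib

namespace Stmt17Aux
variable {d n : ℕ}

/-- The cone generated by finitely many vectors in `ℝ^d`. -/
def coneOf (v : Fin n → Fin d → ℝ) : Set (Fin d → ℝ) :=
  {x | ∃ c : Fin n → ℝ, (∀ j, 0 ≤ c j) ∧ x = ∑ j, c j • v j}

theorem zero_mem_coneOf (v : Fin n → Fin d → ℝ) : 0 ∈ coneOf v :=
  ⟨0, fun _ => le_refl 0, by simp⟩

theorem gen_mem_coneOf (v : Fin n → Fin d → ℝ) (j : Fin n) : v j ∈ coneOf v := by
  refine ⟨Pi.single j 1, fun i => ?_, ?_⟩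
  · rcases eq_or_ne i j with rfl | h
    · simp
    · simp [Pi.single_eq_of_ne h]
  · rw [Finset.sum_eq_single j]
    · simp
    · intro i _ h; simp [Pi.single_eq_of_ne h]
    · simp

theorem add_mem_coneOf {v : Fin n → Fin d → ℝ} {x y : Fin d → ℝ}
    (hx : x ∈ coneOf v) (hy : y ∈ coneOf v) : x + y ∈ coneOf v := by
  obtain ⟨c, hc, rfl⟩ := hx
  obtain ⟨c', hc', rfl⟩ := hy
  exact ⟨c + c', fun j => add_nonneg (hc j) (hc' j), by
    rw [← Finset.sum_add_distrib]
    exact Finset.sum_congr rfl fun j _ => by simp [add_smul]⟩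

theorem smul_mem_coneOf {v : Fin n → Fin d → ℝ} {x : Fin d → ℝ} {t : ℝ}
    (ht : 0 ≤ t) (hx : x ∈ coneOf v) : t • x ∈ coneOf v := by
  obtain ⟨c, hc, rfl⟩ := hx
  exact ⟨t • c, fun j => mul_nonneg ht (hc j), by
    rw [Finset.smul_sum]
    exact Finset.sum_congr rfl fun j _ => by simp [smul_smul]⟩

theorem add_interior_coneOf {v : Fin n → Fin d → ℝ} {x y : Fin d → ℝ}
    (hx : x ∈ coneOf v) (hy : y ∈ interior (coneOf v)) :
    x + y ∈ interior (coneOf v) := by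
  have hmaps : (fun z => x + z) '' interior (coneOf v) ⊆ coneOf v := by
    rintro _ ⟨z, hz, rfl⟩
    exact add_mem_coneOf hx (interior_subset hz)
  have hopen : IsOpen ((fun z => x + z) '' interior (coneOf v)) :=
    (Homeomorph.addLeft x).isOpenMap _ isOpen_interior
  exact interior_maximal hmaps hopen ⟨y, hy, rfl⟩

theorem half_interior_coneOf {v : Fin n → Fin d → ℝ} {x : Fin d → ℝ}
    (hx : x ∈ interior (coneOf v)) :
    (1/2 : ℝ) • x ∈ interior (coneOf v) := by
  have hmaps : (fun z => (1/2 : ℝ) • z) '' interior (coneOf v) ⊆ coneOf v := by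
    rintro _ ⟨z, hz, rfl⟩
    exact smul_mem_coneOf (by norm_num) (interior_subset hz)
  have hopen : IsOpen ((fun z => (1/2 : ℝ) • z) '' interior (coneOf v)) :=
    (isOpenMap_smul₀ (by norm_num : (1/2 : ℝ) ≠ 0)) _ isOpen_interior
  exact interior_maximal hmaps hopen ⟨x, hx, rfl⟩

theorem exists_functional {v : Fin n → Fin d → ℝ}
    (hpointed : ∀ c c' : Fin n → ℝ, (∀ j, 0 ≤ c j) → (∀ j, 0 ≤ c' j) →
      (∑ j, c j • v j) + (∑ j, c' j • v j) = 0 → (∑ j, c j • v j) = 0) :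
    ∃ (f : (Fin d → ℝ) →L[ℝ] ℝ) (δ : ℝ), 0 < δ ∧ ∀ j, v j ≠ 0 → δ ≤ f (v j) := by
  by_cases hJ : ∃ j, v j ≠ 0
  swap
  · exact ⟨0, 1, one_pos, fun j hj => (hJ ⟨j, hj⟩).elim⟩
  set Δ : Set (Fin n → ℝ) :=
    {w | (∀ j, 0 ≤ w j) ∧ (∀ j, v j = 0 → w j = 0) ∧ (∑ j, w j) = 1} with hΔ
  set K : Set (Fin d → ℝ) := (fun w : Fin n → ℝ => ∑ j, w j • v j) '' Δ with hK
  have hmemK : ∀ x : Fin d → ℝ, x ∈ K ↔ ∃ w : Fin n → ℝ, (∀ j, 0 ≤ w j) ∧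
      (∀ j, v j = 0 → w j = 0) ∧ (∑ j, w j) = 1 ∧ x = ∑ j, w j • v j := by
    intro x
    constructor
    · rintro ⟨w, ⟨h1, h2, h3⟩, rfl⟩; exact ⟨w, h1, h2, h3, rfl⟩
    · rintro ⟨w, h1, h2, h3, rfl⟩; exact ⟨w, ⟨h1, h2, h3⟩, rfl⟩
  have hcont : Continuous fun w : Fin n → ℝ => ∑ j, w j • v j :=
    continuous_finset_sum _ fun j _ => (continuous_apply j).smul continuous_const
  have hΔclosed : IsClosed Δ := by
    have hrw : Δ = (⋂ j, {w : Fin n → ℝ | 0 ≤ w j}) ∩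
        ((⋂ j, {w : Fin n → ℝ | v j = 0 → w j = 0}) ∩
          {w : Fin n → ℝ | (∑ j, w j) = 1}) := by
      ext w
      simp only [hΔ, Set.mem_setOf_eq, Set.mem_inter_iff, Set.mem_iInter]
    rw [hrw]
    refine IsClosed.inter (isClosed_iInter fun j =>
        isClosed_le continuous_const (continuous_apply j))
      (IsClosed.inter (isClosed_iInter fun j => ?_)
        (isClosed_eq (continuous_finset_sum _ fun j _ => continuous_apply j)
          continuous_const))
    by_cases hvj : v j = 0
    · have : {w : Fin n → ℝ | v j = 0 → w j = 0} = {w : Fin n → ℝ | w j = 0} := by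
        ext w; simp [hvj]
      rw [this]
      exact isClosed_eq (continuous_apply j) continuous_const
    · have : {w : Fin n → ℝ | v j = 0 → w j = 0} = Set.univ := by
        ext w; simp [hvj]
      rw [this]; exact isClosed_univ
  have hΔcompact : IsCompact Δ := by
    refine IsCompact.of_isClosed_subset (isCompact_Icc (a := (0 : Fin n → ℝ)) (b := 1))
      hΔclosed ?_
    rintro w ⟨h1, _, h3⟩
    refine ⟨fun j => h1 j, fun j => ?_⟩
    calc w j ≤ ∑ j', w j' := Finset.single_le_sum (fun i _ => h1 i) (Finset.mem_univ j)
    _ = 1 := h3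
  have hKclosed : IsClosed K := (hΔcompact.image hcont).isClosed
  have hKconvex : Convex ℝ K := by
    rintro x hx y hy t s ht hs hts
    rw [hmemK] at hx hy ⊢
    obtain ⟨w, hw1, hw2, hw3, rfl⟩ := hx
    obtain ⟨w', hw1', hw2', hw3', rfl⟩ := hy
    refine ⟨fun j => t * w j + s * w' j, fun j =>
      add_nonneg (mul_nonneg ht (hw1 j)) (mul_nonneg hs (hw1' j)),
      fun j hj => ?_, ?_, ?_⟩
    · show t * w j + s * w' j = 0
      rw [hw2 j hj, hw2' j hj]; ring
    · show (∑ j, (t * w j + s * w' j)) = 1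
      rw [Finset.sum_add_distrib, ← Finset.mul_sum, ← Finset.mul_sum, hw3, hw3']
      simpa using hts
    · show t • (∑ j, w j • v j) + s • (∑ j, w' j • v j) = ∑ j, (t * w j + s * w' j) • v j
      rw [Finset.smul_sum, Finset.smul_sum, ← Finset.sum_add_distrib]
      exact Finset.sum_congr rfl fun j _ => by
        rw [add_smul, smul_smul, smul_smul]
  have h0K : (0 : Fin d → ℝ) ∉ K := by
    rw [hmemK]
    rintro ⟨w, hw1, hw2, hw3, hsum⟩
    obtain ⟨j1, hj1⟩ : ∃ j, 0 < w j := by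
      by_contra h
      push_neg at h
      have hz : ∀ j ∈ Finset.univ, w j = (0 : ℝ) :=
        fun j _ => le_antisymm (h j) (hw1 j)
      rw [Finset.sum_congr rfl hz] at hw3
      simp at hw3
    have hvj1 : v j1 ≠ 0 := fun h => by
      rw [hw2 j1 h] at hj1; exact lt_irrefl 0 hj1
    classical
    set c : Fin n → ℝ := fun j => if j = j1 then w j else 0 with hc
    set c' : Fin n → ℝ := fun j => if j = j1 then 0 else w j with hc'
    have h1 : ∀ j, 0 ≤ c j := fun j => by
      by_cases h : j = j1 <;> simp [hc, h, hw1 j1, hw1 j]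
    have h2 : ∀ j, 0 ≤ c' j := fun j => by
      by_cases h : j = j1 <;> simp [hc', h, hw1 j1, hw1 j]
    have h3 : (∑ j, c j • v j) + (∑ j, c' j • v j) = 0 := by
      rw [← Finset.sum_add_distrib]
      have : ∀ j ∈ Finset.univ, c j • v j + c' j • v j = w j • v j := by
        intro j _
        by_cases h : j = j1 <;> simp [hc, hc', h]
      rw [Finset.sum_congr rfl this, ← hsum]
    have hconc := hpointed c c' h1 h2 h3
    have hsingle : (∑ j, c j • v j) = w j1 • v j1 := by
      rw [Finset.sum_eq_single j1 (fun i _ h => by simp [hc, h]) (by simp)]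
      simp [hc]
    rw [hsingle] at hconc
    exact hvj1 (by simpa [smul_eq_zero, hj1.ne'] using hconc)
  obtain ⟨f, u, hu0, hub⟩ := geometric_hahn_banach_point_closed hKconvex hKclosed h0K
  rw [map_zero] at hu0
  refine ⟨f, u, hu0, fun j hj => ?_⟩
  refine le_of_lt (hub (v j) ?_)
  rw [hmemK]
  refine ⟨Pi.single j 1, fun i => ?_, fun i hi => ?_, by simp, ?_⟩
  · rcases eq_or_ne i j with rfl | h
    · simp
    · simp [Pi.single_eq_of_ne h]
  · rcases eq_or_ne i j with rfl | h
    · exact absurd hi hj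
    · simp [Pi.single_eq_of_ne h]
  · rw [Finset.sum_eq_single j]
    · simp
    · intro i _ h; simp [Pi.single_eq_of_ne h]
    · simp


theorem descent_step {v : Fin n → Fin d → ℝ} {f : (Fin d → ℝ) →L[ℝ] ℝ} {δ : ℝ}
    (hδ : 0 < δ) (hfv : ∀ j, v j ≠ 0 → δ ≤ f (v j))
    {x : Fin d → ℝ} (hx : x ∈ interior (coneOf v))
    (hfx : 2 * (1 + ∑ j, |f (v j)|) ≤ f x) :
    ∃ j, v j ≠ 0 ∧ x - v j ∈ interior (coneOf v) ∧ f (x - v j) ≤ f x - δ := by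
  classical
  obtain ⟨c, hc, hxeq⟩ := interior_subset hx
  have hfx' : f x = ∑ j, c j * f (v j) := by
    rw [hxeq, map_sum]
    exact Finset.sum_congr rfl fun j _ => by rw [map_smul, smul_eq_mul]
  obtain ⟨j0, hcj0, hvj0⟩ : ∃ j, 2 ≤ c j ∧ v j ≠ 0 := by
    by_contra h
    push_neg at h
    have hbd : ∀ j ∈ Finset.univ, c j * f (v j) ≤ 2 * |f (v j)| := by
      intro j _
      by_cases hvj : v j = 0
      · rw [hvj, map_zero]; simp
      · have hδj := hfv j hvj
        have hcj : c j ≤ 2 := by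
          by_contra hcj'
          exact hvj (h j (le_of_lt (lt_of_not_ge hcj')))
        calc c j * f (v j) ≤ 2 * f (v j) :=
              mul_le_mul_of_nonneg_right hcj (le_trans hδ.le hδj)
        _ ≤ 2 * |f (v j)| := by
              have := le_abs_self (f (v j)); linarith
    have : f x ≤ ∑ j, 2 * |f (v j)| := by
      rw [hfx']; exact Finset.sum_le_sum hbd
    rw [← Finset.mul_sum] at this
    linarith
  refine ⟨j0, hvj0, ?_, ?_⟩
  · have hhalf : (1/2 : ℝ) • x ∈ interior (coneOf v) := half_interior_coneOf hx
    have hC2 : (1/2 : ℝ) • x - v j0 ∈ coneOf v := by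
      refine ⟨fun j => (1/2) * c j - if j = j0 then 1 else 0, fun j => ?_, ?_⟩
      · by_cases h : j = j0
        · subst h; simp; linarith
        · simp [h]; linarith [hc j]
      · show (1/2 : ℝ) • x - v j0 = ∑ j, ((1/2) * c j - if j = j0 then 1 else 0) • v j
        have e1 : ∑ j, ((1/2 : ℝ) * c j - if j = j0 then 1 else 0) • v j =
            (∑ j, ((1/2 : ℝ) * c j) • v j) - ∑ j, (if j = j0 then (1:ℝ) else 0) • v j := by
          rw [← Finset.sum_sub_distrib]
          exact Finset.sum_congr rfl fun j _ => by rw [sub_smul]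
        have e2 : ∑ j, (if j = j0 then (1:ℝ) else 0) • v j = v j0 := by
          rw [Finset.sum_eq_single j0 (fun i _ h => by simp [h]) (by simp)]
          simp
        have e3 : ∑ j, ((1/2 : ℝ) * c j) • v j = (1/2 : ℝ) • x := by
          rw [hxeq, Finset.smul_sum]
          exact Finset.sum_congr rfl fun j _ => by rw [smul_smul]
        rw [e1, e2, e3]
    have hsum := add_interior_coneOf hC2 hhalf
    have heq : ((1/2 : ℝ) • x - v j0) + (1/2 : ℝ) • x = x - v j0 := by
      rw [sub_add_eq_add_sub, ← add_smul]
      norm_num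
    rwa [heq] at hsum
  · rw [map_sub]
    linarith [hfv j0 hvj0]

theorem bounded_slice {v : Fin n → Fin d → ℝ} {f : (Fin d → ℝ) →L[ℝ] ℝ} {δ : ℝ}
    (hδ : 0 < δ) (hfv : ∀ j, v j ≠ 0 → δ ≤ f (v j))
    {R : ℝ} {x : Fin d → ℝ} (hx : x ∈ coneOf v) (hfx : f x ≤ R) :
    ‖x‖ ≤ (R / δ) * ∑ j, ‖v j‖ := by
  obtain ⟨c, hc, rfl⟩ := hx
  have hfx' : f (∑ j, c j • v j) = ∑ j, c j * f (v j) := by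
    rw [map_sum]
    exact Finset.sum_congr rfl fun j _ => by rw [map_smul, smul_eq_mul]
  have hterm : ∀ j ∈ Finset.univ, (0:ℝ) ≤ c j * f (v j) := by
    intro j _
    by_cases hvj : v j = 0
    · rw [hvj, map_zero, mul_zero]
    · exact mul_nonneg (hc j) (le_trans hδ.le (hfv j hvj))
  have hcj : ∀ j, v j ≠ 0 → c j ≤ R / δ := by
    intro j hvj
    have h1 : c j * δ ≤ c j * f (v j) := mul_le_mul_of_nonneg_left (hfv j hvj) (hc j)
    have h2 : c j * f (v j) ≤ ∑ i, c i * f (v i) :=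
      Finset.single_le_sum hterm (Finset.mem_univ j)
    rw [le_div_iff₀ hδ]
    calc c j * δ ≤ ∑ i, c i * f (v i) := le_trans h1 h2
    _ = f (∑ i, c i • v i) := hfx'.symm
    _ ≤ R := hfx
  calc ‖∑ j, c j • v j‖ ≤ ∑ j, ‖c j • v j‖ := norm_sum_le _ _
  _ ≤ ∑ j, (R / δ) * ‖v j‖ := by
      refine Finset.sum_le_sum fun j _ => ?_
      rw [norm_smul, Real.norm_eq_abs, abs_of_nonneg (hc j)]
      by_cases hvj : v j = 0
      · simp [hvj]
      · exact mul_le_mul_of_nonneg_right (hcj j hvj) (norm_nonneg _)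
  _ = (R / δ) * ∑ j, ‖v j‖ := (Finset.mul_sum _ _ _).symm

end Stmt17Aux

open Stmt17Aux in
/-- Let `N = F ⊕ ℤ^d` with `F` finite abelian, `π` the projection,
and `𝒜 = (a₁,…,aₙ)` elements of `N` whose images generate `ℤ^d` and span a pointed
cone `C ⊆ ℝ^d`. Let `K° = {u ∈ N : π(u) ∈ int C}`. Then `ℕ𝒜 + K° ⊆ K°`, and `K°`
is a finite union of translates `ℕ𝒜 + kᵢ`. -/
theorem stmt_17 {F : Type*} [AddCommGroup F] [Fintype F] {d n : ℕ}
    (a : Fin n → F × (Fin d → ℤ))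
    (hspan : AddSubgroup.closure (Set.range fun j => (a j).2) = ⊤)
    (hpointed : ∀ c c' : Fin n → ℝ, (∀ j, 0 ≤ c j) → (∀ j, 0 ≤ c' j) →
      (∑ j, c j • (fun i => ((a j).2 i : ℝ))) +
        (∑ j, c' j • (fun i => ((a j).2 i : ℝ))) = 0 →
      (∑ j, c j • (fun i => ((a j).2 i : ℝ))) = 0)
    (C : Set (Fin d → ℝ))
    (hC : C = {x : Fin d → ℝ | ∃ c : Fin n → ℝ, (∀ j, 0 ≤ c j) ∧
      x = ∑ j, c j • (fun i => ((a j).2 i : ℝ))})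
    (Kc : Set (F × (Fin d → ℤ)))
    (hKc : Kc = {u : F × (Fin d → ℤ) | (fun i => (u.2 i : ℝ)) ∈ interior C}) :
    (∀ s ∈ AddSubmonoid.closure (Set.range a), ∀ u ∈ Kc, s + u ∈ Kc) ∧
    ∃ (m : ℕ) (g : Fin m → F × (Fin d → ℤ)), (∀ i, g i ∈ Kc) ∧
      Kc = ⋃ i, (fun s => s + g i) '' ↑(AddSubmonoid.closure (Set.range a)) := by
  classical
  set v : Fin n → Fin d → ℝ := fun j => (fun i => ((a j).2 i : ℝ)) with hv
  set cst : F × (Fin d → ℤ) → (Fin d → ℝ) := fun u => (fun i => ((u.2 i : ℤ) : ℝ))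
    with hcst
  have hCc : C = coneOf v := hC
  -- cast lemmas
  have cst_add : ∀ u w : F × (Fin d → ℤ), cst (u + w) = cst u + cst w := by
    intro u w
    funext i
    show (((u.2 + w.2) i : ℤ) : ℝ) = _
    simp only [Pi.add_apply]
    push_cast
    rfl
  have cst_sub : ∀ u w : F × (Fin d → ℤ), cst (u - w) = cst u - cst w := by
    intro u w
    funext i
    show (((u.2 - w.2) i : ℤ) : ℝ) = _
    simp only [Pi.sub_apply]
    push_cast
    rfl
  have cst_a : ∀ j, cst (a j) = v j := fun j => rfl
  have cst_zero : cst 0 = 0 := by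
    funext i
    show (((0 : Fin d → ℤ) i : ℤ) : ℝ) = 0
    simp
  have hKc' : ∀ u, u ∈ Kc ↔ cst u ∈ interior (coneOf v) := by
    intro u
    rw [hKc, ← hCc]
    rfl
  -- π of elements of the monoid lies in the cone
  have hmonC : ∀ s ∈ AddSubmonoid.closure (Set.range a), cst s ∈ coneOf v := by
    intro s hs
    induction hs using AddSubmonoid.closure_induction with
    | mem x hx =>
        obtain ⟨j, rfl⟩ := hx
        rw [cst_a]
        exact gen_mem_coneOf v j
    | zero => rw [cst_zero]; exact zero_mem_coneOf v
    | add x y _ _ hx hy => rw [cst_add]; exact add_mem_coneOf hx hy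
  -- part 1
  have part1 : ∀ s ∈ AddSubmonoid.closure (Set.range a), ∀ u ∈ Kc, s + u ∈ Kc := by
    intro s hs u hu
    rw [hKc' u] at hu
    rw [hKc' (s + u), cst_add]
    exact add_interior_coneOf (hmonC s hs) hu
  refine ⟨part1, ?_⟩
  -- the functional
  obtain ⟨f, δ, hδ, hfv⟩ := exists_functional (v := v) hpointed
  set R₀ : ℝ := 2 * (1 + ∑ j, |f (v j)|) with hR₀
  set B : ℝ := (R₀ / δ) * ∑ j, ‖v j‖ with hB
  set G : Set (F × (Fin d → ℤ)) := {u | u ∈ Kc ∧ f (cst u) < R₀} with hG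
  -- G is finite
  have hGfin : G.Finite := by
    have hsub : G ⊆ (Set.univ : Set F) ×ˢ
        {y : Fin d → ℤ | ∀ i, |((y i : ℤ) : ℝ)| ≤ B} := by
      rintro u ⟨huK, huf⟩
      refine ⟨Set.mem_univ _, fun i => ?_⟩
      have hxC : cst u ∈ coneOf v := interior_subset ((hKc' u).mp huK)
      have hnorm : ‖cst u‖ ≤ B := bounded_slice hδ hfv hxC huf.le
      calc |((u.2 i : ℤ) : ℝ)| = ‖cst u i‖ := rfl
      _ ≤ ‖cst u‖ := norm_le_pi_norm (cst u) i
      _ ≤ B := hnorm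
    refine Set.Finite.subset (Set.Finite.prod Set.finite_univ ?_) hsub
    have : {y : Fin d → ℤ | ∀ i, |((y i : ℤ) : ℝ)| ≤ B} ⊆
        Set.pi Set.univ (fun _ : Fin d => Set.Icc (-⌈B⌉) ⌈B⌉) := by
      intro y hy i _
      have h1 := hy i
      have h2 : |y i| ≤ ⌈B⌉ := by
        have : ((|y i| : ℤ) : ℝ) ≤ B := by push_cast; exact h1
        exact_mod_cast this.trans (Int.le_ceil B)
      rw [abs_le] at h2
      exact ⟨by linarith [h2.1], h2.2⟩
    exact Set.Finite.subset (Set.Finite.pi fun _ => Set.finite_Icc _ _) this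
  -- enumerate G
  set l : List (F × (Fin d → ℤ)) := hGfin.toFinset.toList with hl
  refine ⟨l.length, fun i => l.get i, ?_, ?_⟩
  · intro i
    have : l.get i ∈ l := List.get_mem l i
    have : l.get i ∈ G := by
      rw [← hGfin.mem_toFinset, ← Finset.mem_toList]; exact this
    exact this.1
  -- descent
  have hdesc : ∀ k : ℕ, ∀ u, u ∈ Kc → f (cst u) < R₀ + k * δ →
      ∃ i : Fin l.length, ∃ s ∈ AddSubmonoid.closure (Set.range a),
        u = s + l.get i := by
    intro k
    induction k with
    | zero =>
        intro u hu hfu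
        have huG : u ∈ G := ⟨hu, by simpa using hfu⟩
        have : u ∈ l := by rw [hl, Finset.mem_toList, hGfin.mem_toFinset]; exact huG
        obtain ⟨i, hi⟩ := List.mem_iff_get.mp this
        exact ⟨i, 0, AddSubmonoid.zero_mem _, by rw [zero_add, hi]⟩
    | succ k ih =>
        intro u hu hfu
        by_cases hcase : f (cst u) < R₀
        · have huG : u ∈ G := ⟨hu, hcase⟩
          have : u ∈ l := by rw [hl, Finset.mem_toList, hGfin.mem_toFinset]; exact huG
          obtain ⟨i, hi⟩ := List.mem_iff_get.mp this
          exact ⟨i, 0, AddSubmonoid.zero_mem _, by rw [zero_add, hi]⟩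
        · push_neg at hcase
          obtain ⟨j0, hvj0, hint, hle⟩ :=
            descent_step hδ hfv ((hKc' u).mp hu) hcase
          have hu' : u - a j0 ∈ Kc := by
            rw [hKc' (u - a j0), cst_sub, cst_a]
            exact hint
          have hfu' : f (cst (u - a j0)) < R₀ + k * δ := by
            rw [cst_sub, cst_a]
            push_cast at hfu ⊢
            linarith
          obtain ⟨i, s, hs, heq⟩ := ih (u - a j0) hu' hfu'
          refine ⟨i, a j0 + s, ?_, ?_⟩
          · exact AddSubmonoid.add_mem _
              (AddSubmonoid.subset_closure ⟨j0, rfl⟩) hs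
          · rw [add_assoc, ← heq, add_sub_cancel]
  -- conclusion
  ext u
  simp only [Set.mem_iUnion, Set.mem_image, SetLike.mem_coe]
  constructor
  · intro hu
    obtain ⟨k, hk⟩ : ∃ k : ℕ, f (cst u) < R₀ + k * δ := by
      obtain ⟨k, hk⟩ := exists_nat_gt ((f (cst u) - R₀) / δ)
      refine ⟨k, ?_⟩
      have := (div_lt_iff₀ hδ).mp hk
      linarith
    obtain ⟨i, s, hs, heq⟩ := hdesc k u hu hk
    exact ⟨i, s, hs, heq.symm⟩
  · rintro ⟨i, s, hs, rfl⟩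
    have hgK : l.get i ∈ Kc := by
      have h1 : l.get i ∈ l := List.get_mem l i
      have h2 : l.get i ∈ G := by
        rw [← hGfin.mem_toFinset, ← Finset.mem_toList]; exact h1
      exact h2.1
    exact part1 s hs (l.get i) hgK
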